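/- Let X_0 = ∑_j ν_j x_j x_j^* be Hermitian with eigenvalues ν_1 > ν_2 ≥ ... ≥ ν_d and orthonormal eigenvectors x_j, and let X = ∑_j λ_j v_j v_j^* be Hermitian with ||X - X_0||_F ≤ η ||X_0||_F. Then 1 - |⟨x_1, v_1⟩|^2 ≤ 4η^2 ||X_0||_F^2 / (ν_1 - ν_2)^2. -/

import Mathlib

open Real Complex Matrix

noncomputable abbrev toE {d : ℕ} (u : Fin d → ℂ) : EuclideanSpace ℂ (Fin d) :=
  (WithLp.equiv 2 (Fin d → ℂ)).symm u

lemma innerE {d : ℕ} (u v : Fin d → ℂ) :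
    (inner ℂ (toE u) (toE v) : ℂ) = ∑ i, (starRingEnd ℂ) (u i) * v i := by
  simp only [toE, WithLp.equiv_symm_apply, EuclideanSpace.inner_toLp_toLp]
  simp [dotProduct, mul_comm]

lemma normE_sq {d : ℕ} (u : Fin d → ℂ) : ‖toE u‖^2 = ∑ i, ‖u i‖^2 := by
  rw [EuclideanSpace.norm_eq, Real.sq_sqrt (by positivity)]
  rfl

lemma herm_inner_mulVec {d : ℕ} {A : Matrix (Fin d) (Fin d) ℂ} (hA : A.IsHermitian)
    (x y : Fin d → ℂ) :
    (inner ℂ (toE x) (toE (A.mulVec y)) : ℂ) = inner ℂ (toE (A.mulVec x)) (toE y) := by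
  simp only [toE, WithLp.equiv_symm_apply, EuclideanSpace.inner_toLp_toLp]
  rw [Matrix.star_mulVec, hA.eq]
  simp only [dotProduct_comm (A *ᵥ y), Matrix.dotProduct_mulVec]
  exact dotProduct_comm _ _

lemma rayleigh_key {d : ℕ} (B : OrthonormalBasis (Fin d) ℂ (EuclideanSpace ℂ (Fin d)))
    (μ : Fin d → ℝ) (t : ℝ) (w Aw : EuclideanSpace ℂ (Fin d))
    (h : ∀ i, (inner ℂ (B i) Aw : ℂ) = (μ i : ℂ) * inner ℂ (B i) w)
    (hb : ∀ i, μ i ≤ t ∨ (inner ℂ (B i) w : ℂ) = 0) :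
    (inner ℂ w Aw : ℂ).re ≤ t * ‖w‖^2 := by
  have h1 : (inner ℂ w Aw : ℂ) = ∑ i, (inner ℂ w (B i) : ℂ) * inner ℂ (B i) Aw :=
    (B.sum_inner_mul_inner w Aw).symm
  have h2 : (inner ℂ w Aw : ℂ).re = ∑ i, μ i * ‖(inner ℂ (B i) w : ℂ)‖^2 := by
    rw [h1, Complex.re_sum]
    refine Finset.sum_congr rfl fun i _ => ?_
    rw [h i, ← inner_conj_symm w (B i)]
    set z : ℂ := inner ℂ (B i) w with hzdef
    have e : (starRingEnd ℂ) z * ((μ i : ℂ) * z) = (μ i : ℂ) * ((starRingEnd ℂ) z * z) := by ring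
    rw [e, RCLike.conj_mul]
    simp [← Complex.ofReal_pow]
  rw [h2]
  have h3 : ∑ i, ‖(inner ℂ (B i) w : ℂ)‖^2 = ‖w‖^2 := by
    have e1 : ∀ i, (inner ℂ (B i) w : ℂ) = B.repr w i := fun i => (B.repr_apply_apply w i).symm
    calc ∑ i, ‖(inner ℂ (B i) w : ℂ)‖^2 = ∑ i, ‖B.repr w i‖^2 := by simp_rw [e1]
      _ = ‖B.repr w‖^2 := by
          rw [EuclideanSpace.norm_eq, Real.sq_sqrt (by positivity)]
      _ = ‖w‖^2 := by rw [B.repr.norm_map]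
  calc ∑ i, μ i * ‖(inner ℂ (B i) w : ℂ)‖^2 ≤ ∑ i, t * ‖(inner ℂ (B i) w : ℂ)‖^2 := by
        refine Finset.sum_le_sum fun i _ => ?_
        rcases hb i with h' | h'
        · exact mul_le_mul_of_nonneg_right h' (by positivity)
        · simp [h']
    _ = t * ‖w‖^2 := by rw [← Finset.mul_sum, h3]

lemma eigen_fun {d : ℕ} {A : Matrix (Fin d) (Fin d) ℂ} (hA : A.IsHermitian) (i : Fin d) :
    A.mulVec ((WithLp.equiv 2 (Fin d → ℂ)) (hA.eigenvectorBasis i))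
      = (hA.eigenvalues i : ℂ) • ((WithLp.equiv 2 (Fin d → ℂ)) (hA.eigenvectorBasis i)) := by
  rw [WithLp.equiv_apply, hA.mulVec_eigenvectorBasis i]
  funext j
  simp [Complex.real_smul]

lemma eigen_fun_ne {d : ℕ} {A : Matrix (Fin d) (Fin d) ℂ} (hA : A.IsHermitian) (i : Fin d) :
    (WithLp.equiv 2 (Fin d → ℂ)) (hA.eigenvectorBasis i) ≠ 0 := by
  intro h
  have := congrArg (WithLp.equiv 2 (Fin d → ℂ)).symm h
  simp at this
  exact hA.eigenvectorBasis.orthonormal.ne_zero i this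

lemma rayleigh_of_eigen {d : ℕ} (A : Matrix (Fin d) (Fin d) ℂ) (hA : A.IsHermitian)
    (t : ℝ) (w : Fin d → ℂ)
    (hb : ∀ i, hA.eigenvalues i ≤ t ∨ (inner ℂ (hA.eigenvectorBasis i) (toE w) : ℂ) = 0) :
    (inner ℂ (toE w) (toE (A.mulVec w)) : ℂ).re ≤ t * ‖toE w‖^2 := by
  apply rayleigh_key hA.eigenvectorBasis hA.eigenvalues t _ _ _ hb
  intro i
  have hbeq : toE ((WithLp.equiv 2 (Fin d → ℂ)) (hA.eigenvectorBasis i))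
      = hA.eigenvectorBasis i := by simp [toE]
  rw [← hbeq, herm_inner_mulVec hA, eigen_fun hA i]
  have h2 : toE ((hA.eigenvalues i : ℂ) • ((WithLp.equiv 2 (Fin d → ℂ)) (hA.eigenvectorBasis i)))
      = (hA.eigenvalues i : ℂ) • toE ((WithLp.equiv 2 (Fin d → ℂ)) (hA.eigenvectorBasis i)) := rfl
  rw [h2, inner_smul_left, hbeq]
  simp [Complex.conj_ofReal]

lemma mulVec_frob {d : ℕ} (M : Matrix (Fin d) (Fin d) ℂ) (u : Fin d → ℂ) :
    ‖toE (M.mulVec u)‖ ≤ Real.sqrt (∑ i, ∑ j, ‖M i j‖^2) * ‖toE u‖ := by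
  have hS : (0:ℝ) ≤ ∑ i, ∑ j, ‖M i j‖^2 := by positivity
  have hrow : ∀ i, ‖M.mulVec u i‖^2 ≤ (∑ j, ‖M i j‖^2) * ∑ j, ‖u j‖^2 := by
    intro i
    have h1 : M.mulVec u i = inner ℂ (toE (fun j => (starRingEnd ℂ) (M i j))) (toE u) := by
      rw [innerE]
      simp [Matrix.mulVec, dotProduct]
    rw [h1]
    have h2 := norm_inner_le_norm (𝕜 := ℂ) (toE (fun j => (starRingEnd ℂ) (M i j))) (toE u)
    calc ‖(inner ℂ (toE fun j => (starRingEnd ℂ) (M i j)) (toE u) : ℂ)‖^2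
        ≤ (‖toE fun j => (starRingEnd ℂ) (M i j)‖ * ‖toE u‖)^2 :=
          pow_le_pow_left₀ (norm_nonneg _) h2 2
      _ = (∑ j, ‖M i j‖^2) * ∑ j, ‖u j‖^2 := by
          rw [mul_pow, normE_sq, normE_sq]
          simp
  have hsq : ‖toE (M.mulVec u)‖^2 ≤ (∑ i, ∑ j, ‖M i j‖^2) * ∑ j, ‖u j‖^2 := by
    rw [normE_sq]
    calc ∑ i, ‖M.mulVec u i‖^2 ≤ ∑ i, ((∑ j, ‖M i j‖^2) * ∑ j, ‖u j‖^2) :=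
          Finset.sum_le_sum fun i _ => hrow i
      _ = (∑ i, ∑ j, ‖M i j‖^2) * ∑ j, ‖u j‖^2 := by rw [Finset.sum_mul]
  calc ‖toE (M.mulVec u)‖ = Real.sqrt (‖toE (M.mulVec u)‖^2) :=
        (Real.sqrt_sq (norm_nonneg _)).symm
    _ ≤ Real.sqrt ((∑ i, ∑ j, ‖M i j‖^2) * ∑ j, ‖u j‖^2) := Real.sqrt_le_sqrt hsq
    _ = Real.sqrt (∑ i, ∑ j, ‖M i j‖^2) * Real.sqrt (∑ j, ‖u j‖^2) := Real.sqrt_mul hS _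
    _ = Real.sqrt (∑ i, ∑ j, ‖M i j‖^2) * ‖toE u‖ := by
        rw [← normE_sq, Real.sqrt_sq (norm_nonneg _)]
set_option maxHeartbeats 1000000 in
theorem stmt_16 (d : ℕ) (X0 X : Matrix (Fin d) (Fin d) ℂ)
    (hX0 : X0.IsHermitian) (hX : X.IsHermitian)
    (ν1 ν2 : ℝ) (hgap : ν2 < ν1)
    (x1 : Fin d → ℂ) (hx1 : X0.mulVec x1 = (ν1 : ℂ) • x1) (hx1n : ∑ i, ‖x1 i‖^2 = 1)
    (hsecond : ∀ (μ : ℝ) (v : Fin d → ℂ), v ≠ 0 → X0.mulVec v = (μ : ℂ) • v →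
      (∑ i, (starRingEnd ℂ) (x1 i) * v i) = 0 → μ ≤ ν2)
    (lam : ℝ) (v1 : Fin d → ℂ)
    (hv1 : X.mulVec v1 = (lam : ℂ) • v1) (hv1n : ∑ i, ‖v1 i‖^2 = 1)
    (htop : ∀ (μ : ℝ) (v : Fin d → ℂ), v ≠ 0 → X.mulVec v = (μ : ℂ) • v → μ ≤ lam)
    (η : ℝ) (hη : 0 ≤ η)
    (hF : Real.sqrt (∑ i, ∑ j, ‖(X - X0) i j‖^2) ≤
      η * Real.sqrt (∑ i, ∑ j, ‖X0 i j‖^2)) :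
    1 - ‖∑ i, (starRingEnd ℂ) (x1 i) * v1 i‖^2 ≤
      4 * η^2 * (∑ i, ∑ j, ‖X0 i j‖^2) / (ν1 - ν2)^2 := by
  classical
  set c : ℂ := ∑ i, (starRingEnd ℂ) (x1 i) * v1 i with hc
  set w : Fin d → ℂ := fun i => v1 i - c * x1 i with hw
  have hg : 0 < ν1 - ν2 := sub_pos.mpr hgap
  have hS0 : (0:ℝ) ≤ ∑ i, ∑ j, ‖X0 i j‖^2 :=
    Finset.sum_nonneg fun i _ => Finset.sum_nonneg fun j _ => pow_nonneg (norm_nonneg _) 2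
  set ε : ℝ := η * Real.sqrt (∑ i, ∑ j, ‖X0 i j‖^2) with hεdef
  have hε0 : (0:ℝ) ≤ ε := mul_nonneg hη (Real.sqrt_nonneg _)
  -- basic norms
  have hnx1 : ‖toE x1‖^2 = 1 := by rw [normE_sq]; exact hx1n
  have hnv1 : ‖toE v1‖^2 = 1 := by rw [normE_sq]; exact hv1n
  have hnx1' : ‖toE x1‖ = 1 := by nlinarith [norm_nonneg (toE x1)]
  have hnv1' : ‖toE v1‖ = 1 := by nlinarith [norm_nonneg (toE v1)]
  have hx1v1 : (inner ℂ (toE x1) (toE v1) : ℂ) = c := innerE x1 v1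
  have hx1x1 : (inner ℂ (toE x1) (toE x1) : ℂ) = 1 := by
    rw [inner_self_eq_norm_sq_to_K, hnx1']
    norm_num
  have htoEw : toE w = toE v1 - c • toE x1 := rfl
  have hxw : (inner ℂ (toE x1) (toE w) : ℂ) = 0 := by
    rw [htoEw, inner_sub_right, inner_smul_right, hx1v1, hx1x1]
    ring
  have hnw : ‖toE w‖^2 = 1 - ‖c‖^2 := by
    rw [htoEw, @norm_sub_sq ℂ, hnv1, inner_smul_right,
      ← inner_conj_symm (toE v1) (toE x1), hx1v1, RCLike.mul_conj, norm_smul, hnx1']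
    simp [← Complex.ofReal_pow]
    ring
  -- Frobenius bounds
  have hEv1 : ‖toE ((X - X0).mulVec v1)‖ ≤ ε := by
    calc ‖toE ((X - X0).mulVec v1)‖
        ≤ Real.sqrt (∑ i, ∑ j, ‖(X - X0) i j‖^2) * ‖toE v1‖ := mulVec_frob _ _
      _ ≤ ε * 1 := by rw [hnv1']; exact mul_le_mul_of_nonneg_right hF (by norm_num)
      _ = ε := mul_one ε
  have hEx1 : ‖toE ((X - X0).mulVec x1)‖ ≤ ε := by
    calc ‖toE ((X - X0).mulVec x1)‖
        ≤ Real.sqrt (∑ i, ∑ j, ‖(X - X0) i j‖^2) * ‖toE x1‖ := mulVec_frob _ _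
      _ ≤ ε * 1 := by rw [hnx1']; exact mul_le_mul_of_nonneg_right hF (by norm_num)
      _ = ε := mul_one ε
  -- lower bound on lam
  have hlamX : ∀ i, hX.eigenvalues i ≤ lam := fun i =>
    htop _ _ (eigen_fun_ne hX i) (eigen_fun hX i)
  have hR1 : (inner ℂ (toE x1) (toE (X.mulVec x1)) : ℂ).re ≤ lam := by
    have := rayleigh_of_eigen X hX lam x1 (fun i => Or.inl (hlamX i))
    rwa [hnx1, mul_one] at this
  have hsplit : (inner ℂ (toE x1) (toE (X.mulVec x1)) : ℂ)
      = (ν1 : ℂ) + inner ℂ (toE x1) (toE ((X - X0).mulVec x1)) := by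
    have h1 : X.mulVec x1 = X0.mulVec x1 + (X - X0).mulVec x1 := by
      rw [Matrix.sub_mulVec]
      abel
    have h2 : toE (X0.mulVec x1 + (X - X0).mulVec x1)
        = toE (X0.mulVec x1) + toE ((X - X0).mulVec x1) := rfl
    have h3 : toE ((ν1:ℂ) • x1) = (ν1:ℂ) • toE x1 := rfl
    rw [h1, h2, inner_add_right, hx1, h3, inner_smul_right, hx1x1, mul_one]
  have hν1lam : ν1 - ε ≤ lam := by
    have h1 : ‖(inner ℂ (toE x1) (toE ((X - X0).mulVec x1)) : ℂ)‖ ≤ ε := by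
      calc ‖(inner ℂ (toE x1) (toE ((X - X0).mulVec x1)) : ℂ)‖
          ≤ ‖toE x1‖ * ‖toE ((X - X0).mulVec x1)‖ := norm_inner_le_norm _ _
        _ ≤ 1 * ε := by rw [hnx1']; exact mul_le_mul_of_nonneg_left hEx1 (by norm_num)
        _ = ε := one_mul ε
    have h2 : |(inner ℂ (toE x1) (toE ((X - X0).mulVec x1)) : ℂ).re| ≤ ε :=
      le_trans (Complex.abs_re_le_norm _) h1
    have h3 : (inner ℂ (toE x1) (toE (X.mulVec x1)) : ℂ).re
        = ν1 + (inner ℂ (toE x1) (toE ((X - X0).mulVec x1)) : ℂ).re := by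
      rw [hsplit]
      simp
    rw [h3] at hR1
    have := abs_le.mp h2
    linarith [this.1]
  -- X0 eigen analysis
  have hbf : ∀ i, X0.mulVec ((WithLp.equiv 2 (Fin d → ℂ)) (hX0.eigenvectorBasis i))
      = (hX0.eigenvalues i : ℂ) • ((WithLp.equiv 2 (Fin d → ℂ)) (hX0.eigenvectorBasis i)) :=
    fun i => eigen_fun hX0 i
  have hbne : ∀ i, (WithLp.equiv 2 (Fin d → ℂ)) (hX0.eigenvectorBasis i) ≠ 0 :=
    fun i => eigen_fun_ne hX0 i
  have htoEb : ∀ i, toE ((WithLp.equiv 2 (Fin d → ℂ)) (hX0.eigenvectorBasis i))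
      = hX0.eigenvectorBasis i := fun i => by simp [toE]
  have hon := orthonormal_iff_ite.mp hX0.eigenvectorBasis.orthonormal
  have ha : ∀ i, (inner ℂ (hX0.eigenvectorBasis i) (toE x1) : ℂ) = 0 → hX0.eigenvalues i ≤ ν2 := by
    intro i h0
    refine hsecond (hX0.eigenvalues i) _ (hbne i) (hbf i) ?_
    have e1 : ∑ j, (starRingEnd ℂ) (x1 j) * ((WithLp.equiv 2 (Fin d → ℂ)) (hX0.eigenvectorBasis i)) j
        = inner ℂ (toE x1) (toE ((WithLp.equiv 2 (Fin d → ℂ)) (hX0.eigenvectorBasis i))) := (innerE _ _).symm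
    rw [e1, htoEb i, ← inner_conj_symm (toE x1) (hX0.eigenvectorBasis i), h0, map_zero]
  have hmu : ∀ i, (inner ℂ (hX0.eigenvectorBasis i) (toE x1) : ℂ) ≠ 0 → hX0.eigenvalues i = ν1 := by
    intro i hne
    have e1 : (inner ℂ (hX0.eigenvectorBasis i) (toE (X0.mulVec x1)) : ℂ)
        = (ν1:ℂ) * inner ℂ (hX0.eigenvectorBasis i) (toE x1) := by
      rw [hx1]
      have h3 : toE ((ν1:ℂ) • x1) = (ν1:ℂ) • toE x1 := rfl
      rw [h3, inner_smul_right]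
    have e2 : (inner ℂ (hX0.eigenvectorBasis i) (toE (X0.mulVec x1)) : ℂ)
        = (hX0.eigenvalues i : ℂ) * inner ℂ (hX0.eigenvectorBasis i) (toE x1) := by
      rw [← htoEb i, herm_inner_mulVec hX0, hbf i]
      have h4 : toE ((hX0.eigenvalues i : ℂ) • ((WithLp.equiv 2 (Fin d → ℂ)) (hX0.eigenvectorBasis i)))
          = (hX0.eigenvalues i : ℂ) • toE ((WithLp.equiv 2 (Fin d → ℂ)) (hX0.eigenvectorBasis i)) := rfl
      rw [h4, inner_smul_left, htoEb i, Complex.conj_ofReal]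
    have e3 : ((hX0.eigenvalues i : ℂ) - ν1) * inner ℂ (hX0.eigenvectorBasis i) (toE x1) = 0 := by
      rw [sub_mul, ← e2, ← e1]
      ring
    rcases mul_eq_zero.mp e3 with h | h
    · have h5 : (hX0.eigenvalues i : ℂ) = (ν1:ℂ) := sub_eq_zero.mp h
      exact_mod_cast h5
    · exact absurd h hne
  have huniq : ∀ i j, i ≠ j → hX0.eigenvalues i = ν1 → hX0.eigenvalues j = ν1 →
      (inner ℂ (hX0.eigenvectorBasis i) (toE x1) : ℂ) ≠ 0 →
      (inner ℂ (hX0.eigenvectorBasis j) (toE x1) : ℂ) ≠ 0 → False := by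
    intro i j hij hμi hμj hαi hαj
    set ai : ℂ := inner ℂ (hX0.eigenvectorBasis i) (toE x1) with hai
    set aj : ℂ := inner ℂ (hX0.eigenvectorBasis j) (toE x1) with haj
    set bi : Fin d → ℂ := (WithLp.equiv 2 (Fin d → ℂ)) (hX0.eigenvectorBasis i) with hbi
    set bj : Fin d → ℂ := (WithLp.equiv 2 (Fin d → ℂ)) (hX0.eigenvectorBasis j) with hbj
    set u : Fin d → ℂ := (starRingEnd ℂ) aj • bi - (starRingEnd ℂ) ai • bj with hu
    have htu : toE u = (starRingEnd ℂ) aj • hX0.eigenvectorBasis i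
        - (starRingEnd ℂ) ai • hX0.eigenvectorBasis j := by
      have : toE u = (starRingEnd ℂ) aj • toE bi - (starRingEnd ℂ) ai • toE bj := rfl
      rw [this, hbi, hbj, htoEb i, htoEb j]
    have hiu : (inner ℂ (hX0.eigenvectorBasis i) (toE u) : ℂ) = (starRingEnd ℂ) aj := by
      rw [htu, inner_sub_right, inner_smul_right, inner_smul_right, hon i i, hon i j]
      simp [hij]
    have hu0 : u ≠ 0 := by
      intro h0
      rw [h0] at hiu
      have : toE (0 : Fin d → ℂ) = 0 := rfl
      rw [this, inner_zero_right] at hiu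
      exact hαj (by simpa using congrArg (starRingEnd ℂ) hiu.symm)
    have hXu : X0.mulVec u = (ν1 : ℂ) • u := by
      rw [hu, Matrix.mulVec_sub, Matrix.mulVec_smul, Matrix.mulVec_smul, hbf i, hbf j, hμi, hμj]
      funext k
      simp only [Pi.sub_apply, Pi.smul_apply, smul_eq_mul]
      ring
    have hux : ∑ k, (starRingEnd ℂ) (x1 k) * u k = 0 := by
      rw [← innerE x1 u, htu, inner_sub_right, inner_smul_right, inner_smul_right,
        ← inner_conj_symm (toE x1) (hX0.eigenvectorBasis i),
        ← inner_conj_symm (toE x1) (hX0.eigenvectorBasis j), ← hai, ← haj]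
      ring
    exact absurd (hsecond ν1 u hu0 hXu hux) (not_le.mpr hgap)
  have hborth : ∀ i, ¬ hX0.eigenvalues i ≤ ν2 → (inner ℂ (hX0.eigenvectorBasis i) (toE w) : ℂ) = 0 := by
    intro i hi
    have hαi : (inner ℂ (hX0.eigenvectorBasis i) (toE x1) : ℂ) ≠ 0 := fun h => hi (ha i h)
    have hzero : ∀ j, j ≠ i → (inner ℂ (hX0.eigenvectorBasis j) (toE x1) : ℂ) = 0 := by
      intro j hji
      by_contra hαj
      exact huniq i j (Ne.symm hji) (hmu i hαi) (hmu j hαj) hαi hαj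
    have hx1eq : toE x1 = (inner ℂ (hX0.eigenvectorBasis i) (toE x1) : ℂ) • hX0.eigenvectorBasis i := by
      conv_lhs => rw [← hX0.eigenvectorBasis.sum_repr' (toE x1)]
      exact Finset.sum_eq_single i (fun j _ hji => by rw [hzero j hji, zero_smul])
        (fun h => absurd (Finset.mem_univ i) h)
    have h5 : (inner ℂ (toE x1) (toE w) : ℂ)
        = (starRingEnd ℂ) (inner ℂ (hX0.eigenvectorBasis i) (toE x1) : ℂ)
          * inner ℂ (hX0.eigenvectorBasis i) (toE w) := by
      conv_lhs => rw [hx1eq]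
      rw [inner_smul_left]
    rw [hxw] at h5
    rcases mul_eq_zero.mp h5.symm with h | h
    · exact absurd (by simpa using congrArg (starRingEnd ℂ) h) hαi
    · exact h
  have hL2 : (inner ℂ (toE w) (toE (X0.mulVec w)) : ℂ).re ≤ ν2 * ‖toE w‖^2 := by
    apply rayleigh_of_eigen X0 hX0 ν2 w
    intro i
    by_cases h : hX0.eigenvalues i ≤ ν2
    · exact Or.inl h
    · exact Or.inr (hborth i h)
  -- main chain
  have hid : (lam:ℂ) • w - X0.mulVec w = (X - X0).mulVec v1 - (c * ((lam:ℂ) - ν1)) • x1 := by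
    have h1 : X0.mulVec w = X0.mulVec v1 - c • X0.mulVec x1 := by
      have hw' : w = v1 - c • x1 := by
        funext k
        simp [hw]
      rw [hw', Matrix.mulVec_sub, Matrix.mulVec_smul]
    rw [h1, hx1, Matrix.sub_mulVec, hv1]
    funext k
    simp only [Pi.sub_apply, Pi.smul_apply, smul_eq_mul, hw]
    ring
  have hwx1 : (inner ℂ (toE w) (toE x1) : ℂ) = 0 := by
    rw [← inner_conj_symm (toE w) (toE x1), hxw, map_zero]
  have hlhs : (inner ℂ (toE w) (toE ((lam:ℂ) • w - X0.mulVec w)) : ℂ).re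
      = lam * ‖toE w‖^2 - (inner ℂ (toE w) (toE (X0.mulVec w)) : ℂ).re := by
    have h6 : toE ((lam:ℂ) • w - X0.mulVec w) = (lam:ℂ) • toE w - toE (X0.mulVec w) := rfl
    rw [h6, inner_sub_right, inner_smul_right, Complex.sub_re, Complex.re_ofReal_mul]
    congr 1
    have h7 := inner_self_eq_norm_sq (𝕜 := ℂ) (toE w)
    simp only [RCLike.re_to_complex] at h7
    rw [h7]
  have hrhs : (inner ℂ (toE w) (toE ((lam:ℂ) • w - X0.mulVec w)) : ℂ).re ≤ ε * ‖toE w‖ := by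
    have hz : (inner ℂ (toE w) (toE ((lam:ℂ) • w - X0.mulVec w)) : ℂ)
        = inner ℂ (toE w) (toE ((X - X0).mulVec v1)) := by
      rw [hid]
      have h7 : toE ((X - X0).mulVec v1 - (c * ((lam:ℂ) - ν1)) • x1)
          = toE ((X - X0).mulVec v1) - (c * ((lam:ℂ) - ν1)) • toE x1 := rfl
      rw [h7, inner_sub_right, inner_smul_right, hwx1, mul_zero, sub_zero]
    calc (inner ℂ (toE w) (toE ((lam:ℂ) • w - X0.mulVec w)) : ℂ).re
        ≤ ‖(inner ℂ (toE w) (toE ((lam:ℂ) • w - X0.mulVec w)) : ℂ)‖ := Complex.re_le_norm _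
      _ = ‖(inner ℂ (toE w) (toE ((X - X0).mulVec v1)) : ℂ)‖ := by
          rw [hz]
      _ ≤ ‖toE w‖ * ‖toE ((X - X0).mulVec v1)‖ := norm_inner_le_norm _ _
      _ ≤ ‖toE w‖ * ε := mul_le_mul_of_nonneg_left hEv1 (norm_nonneg _)
      _ = ε * ‖toE w‖ := mul_comm _ _
  have hmain : (lam - ν2) * ‖toE w‖^2 ≤ ε * ‖toE w‖ := by nlinarith [hlhs, hrhs, hL2]
  -- conclusion
  have hgoal2 : 1 - ‖c‖^2 = ‖toE w‖^2 := by
    rw [hnw]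
  rw [hgoal2]
  have hε2 : 4 * η^2 * (∑ i, ∑ j, ‖X0 i j‖^2) = 4 * ε^2 := by
    rw [hεdef, mul_pow, Real.sq_sqrt hS0]
    ring
  rw [hε2, le_div_iff₀ (by positivity : (0:ℝ) < (ν1 - ν2)^2)]
  have hs0 : 0 ≤ ‖toE w‖ := norm_nonneg _
  have hs1 : ‖toE w‖^2 ≤ 1 := by
    rw [hnw]
    nlinarith [sq_nonneg ‖c‖]
  by_cases hcase : ν1 - ν2 ≤ 2*ε
  · nlinarith [hs1, hg, hε0]
  · push_neg at hcase
    have hlam2 : (ν1 - ν2)/2 ≤ lam - ν2 := by linarith [hν1lam]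
    have hkey : ((ν1 - ν2)/2) * ‖toE w‖^2 ≤ ε * ‖toE w‖ :=
      le_trans (mul_le_mul_of_nonneg_right hlam2 (sq_nonneg _)) hmain
    rcases eq_or_lt_of_le hs0 with h | h
    · rw [← h]
      nlinarith [hε0]
    · have hdiv : ((ν1 - ν2)/2) * ‖toE w‖ ≤ ε := by
        have h8 : (((ν1 - ν2)/2) * ‖toE w‖) * ‖toE w‖ ≤ ε * ‖toE w‖ := by nlinarith [hkey]
        exact le_of_mul_le_mul_right h8 h
      have hnn : 0 ≤ ((ν1 - ν2)/2) * ‖toE w‖ := mul_nonneg (by linarith) hs0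
      have h9 := pow_le_pow_left₀ hnn hdiv 2
      nlinarith [h9]
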